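/- (Bipartite (2,n) Bell polytope) Let n ≥ 2. A vector (p_1, p_2, q_3,...,q_{n+2}, (p_{is})_{i∈{1,2}, s∈{3,...,n+2}}) lies in the convex hull of the vectors (ε_1, ε_2, ε_3,...,ε_{n+2}, (ε_iε_s)) over ε ∈ {0,1}^{n+2} if and only if it satisfies: 0 ≤ p_{is} ≤ min(p_i, q_s), p_i + q_s − p_{is} ≤ 1 for all i ∈ {1,2}, s ∈ {3,...,n+2}, and for every pair s < t in {3,...,n+2} the eight CHSH inequalities −1 ≤ p_{is} + p_{it} + p_{jt} − p_{js} − p_i − q_t ≤ 0 for {i,j} = {1,2} and the analogous ones with s,t swapped. -/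

import Mathlib

/-- `{0,1}`-valued assignment as a real number. -/
noncomputable def bv (b : Bool) : ℝ := if b then 1 else 0

/-- Alice's observables among the `n+2` observables: indices `1, 2`. -/
def aliceIdx (n : ℕ) (i : Fin 2) : Fin (n + 2) := i.castLE (by omega)

/-- Bob's observables among the `n+2` observables: indices `3, …, n+2`. -/
def bobIdx (n : ℕ) (s : Fin n) : Fin (n + 2) := ⟨s.1 + 2, by omega⟩

/-- Vertex of the bipartite `(2,n)` correlation polytope: the truth-table row
`(ε₁, …, ε_{n+2}, (ε_i ε_s)_{i ≤ 2, s ≥ 3})`. -/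
noncomputable def bell2nVertex (n : ℕ) (ε : Fin (n + 2) → Bool) :
    (Fin (n + 2) ⊕ Fin 2 × Fin n) → ℝ :=
  Sum.elim (fun i => bv (ε i))
    (fun is => bv (ε (aliceIdx n is.1)) * bv (ε (bobIdx n is.2)))

namespace Bell2nAux

lemma le_of_mem_hull {α : Type*} {S : Set (α → ℝ)} {f : (α → ℝ) → ℝ}
    (hf : IsLinearMap ℝ f) (c : ℝ) (h : ∀ v ∈ S, f v ≤ c) {p : α → ℝ}
    (hp : p ∈ convexHull ℝ S) : f p ≤ c :=
  convexHull_min h (convex_halfSpace_le hf c) hp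

lemma bv_mem : ∀ b : Bool, bv b = 0 ∨ bv b = 1 := by
  intro b; cases b <;> simp [bv]

/-- joint weights for (ε₁, ε₂) -/
noncomputable def mw (p1 p2 r : ℝ) (a b : Bool) : ℝ :=
  if a then (if b then r else p1 - r) else (if b then p2 - r else 1 - p1 - p2 + r)

/-- the free parameter for a single triple -/
noncomputable def ww (p1 p2 r q u v : ℝ) : ℝ :=
  max (max 0 (r + u - p1)) (max (r + v - p2) (u + v - q))

/-- trivariate weights for (ε₁, ε₂, ε_s) -/
noncomputable def xw (p1 p2 r q u v : ℝ) (a b c : Bool) : ℝ :=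
  if a then (if b then (if c then ww p1 p2 r q u v else r - ww p1 p2 r q u v)
             else (if c then u - ww p1 p2 r q u v else p1 - r - u + ww p1 p2 r q u v))
  else (if b then (if c then v - ww p1 p2 r q u v else p2 - r - v + ww p1 p2 r q u v)
        else (if c then q - u - v + ww p1 p2 r q u v
              else 1 - p1 - p2 - q + r + u + v - ww p1 p2 r q u v))

lemma xw_nonneg {p1 p2 r q u v : ℝ}
    (hu0 : 0 ≤ u) (hup : u ≤ p1) (huq : u ≤ q) (hu1 : p1 + q - u ≤ 1)
    (hv0 : 0 ≤ v) (hvp : v ≤ p2) (hvq : v ≤ q) (hv1 : p2 + q - v ≤ 1)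
    (hr1 : r ≤ p1) (hr2 : r ≤ p2) (hrL1 : u + v - q ≤ r)
    (hrL2 : p1 + p2 + q - u - v - 1 ≤ r) (hrL3 : p1 + p2 - 1 ≤ r) (hr0 : 0 ≤ r)
    (hrU1 : r ≤ p1 - u + v) (hrU2 : r ≤ p2 + u - v) :
    ∀ a b c, 0 ≤ xw p1 p2 r q u v a b c := by
  set w := ww p1 p2 r q u v with hw
  have h1 : 0 ≤ w := le_trans (le_max_left 0 _) (le_max_left _ _)
  have h2 : r + u - p1 ≤ w := le_trans (le_max_right 0 _) (le_max_left _ _)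
  have h3 : r + v - p2 ≤ w := le_trans (le_max_left _ _) (le_max_right _ _)
  have h4 : u + v - q ≤ w := le_trans (le_max_right _ _) (le_max_right _ _)
  have h5 : w ≤ r := by
    apply max_le (max_le hr0 (by linarith)) (max_le (by linarith) (by linarith))
  have h6 : w ≤ u := by
    apply max_le (max_le hu0 (by linarith)) (max_le (by linarith) (by linarith))
  have h7 : w ≤ v := by
    apply max_le (max_le hv0 (by linarith)) (max_le (by linarith) (by linarith))
  have h8 : w ≤ 1 - p1 - p2 - q + r + u + v := by
    apply max_le (max_le (by linarith) (by linarith)) (max_le (by linarith) (by linarith))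
  intro a b c
  cases a <;> cases b <;> cases c <;>
    simp only [xw, ← hw, Bool.false_eq_true, if_true, if_false] <;> linarith

lemma xw_sum_c (p1 p2 r q u v : ℝ) (a b : Bool) :
    xw p1 p2 r q u v a b true + xw p1 p2 r q u v a b false = mw p1 p2 r a b := by
  cases a <;> cases b <;>
    simp only [xw, mw, Bool.false_eq_true, if_true, if_false] <;> ring

lemma sum_prod_eq {n : ℕ} (X : Fin n → Bool → ℝ) (M : ℝ)
    (h : ∀ s, X s true + X s false = M) :
    ∑ c : Fin n → Bool, ∏ s, X s (c s) = M ^ n := by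
  rw [← Fintype.prod_sum]
  simp only [Fintype.sum_bool, h, Finset.prod_const, Finset.card_univ, Fintype.card_fin]

lemma sum_prod_bv_eq {n : ℕ} (s0 : Fin n) (X : Fin n → Bool → ℝ) (M : ℝ)
    (h : ∀ s, X s true + X s false = M) :
    ∑ c : Fin n → Bool, bv (c s0) * ∏ s, X s (c s) = X s0 true * M ^ (n - 1) := by
  have key : ∀ c : Fin n → Bool, bv (c s0) * ∏ s, X s (c s)
      = ∏ s, ((if s = s0 then bv (c s) else 1) * X s (c s)) := by
    intro c
    rw [Finset.prod_mul_distrib, Finset.prod_ite_eq' Finset.univ s0 (fun s => bv (c s))]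
    simp
  simp_rw [key]
  rw [← Fintype.prod_sum (fun (s : Fin n) (j : Bool) => (if s = s0 then bv j else 1) * X s j)]
  have h2 : ∀ s : Fin n, (∑ j : Bool, (if s = s0 then bv j else 1) * X s j)
      = if s = s0 then X s0 true else M := by
    intro s
    by_cases hs : s = s0 <;> simp [hs, bv, Fintype.sum_bool, h s]
  simp_rw [h2]
  rw [← Finset.mul_prod_erase Finset.univ _ (Finset.mem_univ s0)]
  rw [if_pos rfl]
  congr 1
  rw [Finset.prod_congr rfl (fun s hs => if_neg (Finset.mem_erase.1 hs).1)]
  rw [Finset.prod_const, Finset.card_erase_of_mem (Finset.mem_univ s0),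
    Finset.card_univ, Fintype.card_fin]

/-- The main construction: a joint distribution with the prescribed marginals. -/
lemma construct {n : ℕ} (hn : 1 ≤ n) (p1 p2 : ℝ) (q u v : Fin n → ℝ)
    (hu0 : ∀ s, 0 ≤ u s) (hup : ∀ s, u s ≤ p1) (huq : ∀ s, u s ≤ q s)
    (hu1 : ∀ s, p1 + q s - u s ≤ 1)
    (hv0 : ∀ s, 0 ≤ v s) (hvp : ∀ s, v s ≤ p2) (hvq : ∀ s, v s ≤ q s)
    (hv1 : ∀ s, p2 + q s - v s ≤ 1)
    (hC1 : ∀ s t, s ≠ t → u s + v s - q s ≤ p1 - u t + v t)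
    (hC2 : ∀ s t, s ≠ t → p1 + p2 + q s - u s - v s - 1 ≤ p1 - u t + v t)
    (hC3 : ∀ s t, s ≠ t → u s + v s - q s ≤ p2 + u t - v t)
    (hC4 : ∀ s t, s ≠ t → p1 + p2 + q s - u s - v s - 1 ≤ p2 + u t - v t) :
    ∃ μ : Bool × Bool × (Fin n → Bool) → ℝ,
      (∀ i, 0 ≤ μ i) ∧ (∑ i, μ i) = 1 ∧
      (∑ i, μ i * bv i.1) = p1 ∧ (∑ i, μ i * bv i.2.1) = p2 ∧
      (∀ s, (∑ i, μ i * bv (i.2.2 s)) = q s) ∧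
      (∀ s, (∑ i, μ i * (bv i.1 * bv (i.2.2 s))) = u s) ∧
      (∀ s, (∑ i, μ i * (bv i.2.1 * bv (i.2.2 s))) = v s) := by
  have hne : Nonempty (Fin n) := ⟨⟨0, by omega⟩⟩
  set s0 : Fin n := ⟨0, by omega⟩ with hs0
  set L : Fin n → ℝ := fun s => max (u s + v s - q s) (p1 + p2 + q s - u s - v s - 1) with hL
  set r : ℝ := max (max 0 (p1 + p2 - 1)) (Finset.univ.sup' Finset.univ_nonempty L) with hrdef
  have hp1le1 : p1 ≤ 1 := by linarith [hu1 s0, huq s0]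
  have hp2le1 : p2 ≤ 1 := by linarith [hv1 s0, hvq s0]
  have hp10 : 0 ≤ p1 := le_trans (hu0 s0) (hup s0)
  have hp20 : 0 ≤ p2 := le_trans (hv0 s0) (hvp s0)
  have hr0 : 0 ≤ r := le_trans (le_max_left 0 _) (le_max_left _ _)
  have hrL3 : p1 + p2 - 1 ≤ r := le_trans (le_max_right 0 _) (le_max_left _ _)
  have hsup : ∀ s, L s ≤ r :=
    fun s => le_trans (Finset.le_sup' L (Finset.mem_univ s)) (le_max_right _ _)
  have hrL1 : ∀ s, u s + v s - q s ≤ r :=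
    fun s => le_trans (le_max_left _ _) (hsup s)
  have hrL2 : ∀ s, p1 + p2 + q s - u s - v s - 1 ≤ r :=
    fun s => le_trans (le_max_right _ _) (hsup s)
  have hr1 : r ≤ p1 := by
    apply max_le (max_le hp10 (by linarith))
    apply Finset.sup'_le
    intro s _
    exact max_le (by linarith [hup s, hvq s]) (by linarith [hv1 s, hu0 s])
  have hr2 : r ≤ p2 := by
    apply max_le (max_le hp20 (by linarith))
    apply Finset.sup'_le
    intro s _
    exact max_le (by linarith [hvp s, huq s]) (by linarith [hu1 s, hv0 s])
  have hrU1 : ∀ t, r ≤ p1 - u t + v t := by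
    intro t
    apply max_le (max_le (by linarith [hup t, hv0 t]) (by linarith [huq t, hv1 t]))
    apply Finset.sup'_le
    intro s _
    rcases eq_or_ne s t with hst | hst
    · subst hst
      exact max_le (by linarith [hup s, huq s]) (by linarith [hv1 s, hv0 s])
    · exact max_le (hC1 s t hst) (hC2 s t hst)
  have hrU2 : ∀ t, r ≤ p2 + u t - v t := by
    intro t
    apply max_le (max_le (by linarith [hvp t, hu0 t]) (by linarith [hvq t, hu1 t]))
    apply Finset.sup'_le
    intro s _
    rcases eq_or_ne s t with hst | hst
    · subst hst
      exact max_le (by linarith [hvp s, hvq s]) (by linarith [hu1 s, hu0 s])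
    · exact max_le (hC3 s t hst) (hC4 s t hst)
  set x : Fin n → Bool → Bool → Bool → ℝ :=
    fun s => xw p1 p2 r (q s) (u s) (v s) with hx
  have hx0 : ∀ s a b c, 0 ≤ x s a b c := fun s =>
    xw_nonneg (hu0 s) (hup s) (huq s) (hu1 s) (hv0 s) (hvp s) (hvq s) (hv1 s)
      hr1 hr2 (hrL1 s) (hrL2 s) hrL3 hr0 (hrU1 s) (hrU2 s)
  have hxsum : ∀ s a b, x s a b true + x s a b false = mw p1 p2 r a b :=
    fun s => xw_sum_c p1 p2 r (q s) (u s) (v s)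
  have hm0 : ∀ a b, 0 ≤ mw p1 p2 r a b := by
    intro a b
    cases a <;> cases b <;>
      simp only [mw, Bool.false_eq_true, if_true, if_false] <;> linarith
  have hxle : ∀ s a b, x s a b true ≤ mw p1 p2 r a b := by
    intro s a b
    have := hxsum s a b
    linarith [hx0 s a b false]
  set μ : Bool × Bool × (Fin n → Bool) → ℝ :=
    fun i => (∏ s, x s i.1 i.2.1 (i.2.2 s)) / (mw p1 p2 r i.1 i.2.1) ^ (n - 1) with hμ
  have hμ0 : ∀ i, 0 ≤ μ i := by
    intro i
    exact div_nonneg (Finset.prod_nonneg fun s _ => hx0 s _ _ _)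
      (pow_nonneg (hm0 _ _) _)
  have key1 : ∀ a b, ∑ c : Fin n → Bool, μ (a, b, c) = mw p1 p2 r a b := by
    intro a b
    have hs := sum_prod_eq (fun s cc => x s a b cc) (mw p1 p2 r a b) (fun s => hxsum s a b)
    try simp only at hs
    simp only [hμ]
    rw [← Finset.sum_div, hs]
    rcases eq_or_ne (mw p1 p2 r a b) 0 with h | h
    · rw [h, zero_pow (by omega), zero_div]
    · have hn1 : mw p1 p2 r a b ^ n = mw p1 p2 r a b ^ (n - 1) * mw p1 p2 r a b := by
        rw [← pow_succ]
        congr 1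
        omega
      rw [hn1, mul_div_cancel_left₀ _ (pow_ne_zero _ h)]
  have key2 : ∀ a b (t : Fin n),
      ∑ c : Fin n → Bool, μ (a, b, c) * bv (c t) = x t a b true := by
    intro a b t
    have hs := sum_prod_bv_eq t (fun s cc => x s a b cc) (mw p1 p2 r a b)
      (fun s => hxsum s a b)
    try simp only at hs
    have hterm : ∀ c : Fin n → Bool, μ (a, b, c) * bv (c t)
        = (bv (c t) * ∏ s, x s a b (c s)) / (mw p1 p2 r a b) ^ (n - 1) := by
      intro c; simp only [hμ]; ring
    rw [Finset.sum_congr rfl (fun c _ => hterm c), ← Finset.sum_div, hs]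
    rcases eq_or_ne (mw p1 p2 r a b) 0 with h | h
    · have hx0' : x t a b true = 0 :=
        le_antisymm (h ▸ hxle t a b) (hx0 t a b true)
      rw [hx0', zero_mul, zero_div]
    · rw [mul_div_assoc, div_self (pow_ne_zero _ h), mul_one]
  refine ⟨μ, hμ0, ?_, ?_, ?_, ?_, ?_, ?_⟩
  · rw [Fintype.sum_prod_type]
    simp_rw [Fintype.sum_prod_type, key1]
    simp only [Fintype.sum_bool, mw, Bool.false_eq_true, if_true, if_false]
    ring
  · rw [Fintype.sum_prod_type]
    simp_rw [Fintype.sum_prod_type, ← Finset.sum_mul, key1]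
    simp only [Fintype.sum_bool, mw, bv, Bool.false_eq_true, if_true, if_false]
    ring
  · rw [Fintype.sum_prod_type]
    simp_rw [Fintype.sum_prod_type]
    have : ∀ a b : Bool, ∑ c : Fin n → Bool, μ (a, b, c) * bv b
        = mw p1 p2 r a b * bv b := by
      intro a b; rw [← Finset.sum_mul, key1]
    simp_rw [this]
    simp only [Fintype.sum_bool, mw, bv, Bool.false_eq_true, if_true, if_false]
    ring
  · intro t
    rw [Fintype.sum_prod_type]
    simp_rw [Fintype.sum_prod_type, key2]
    simp only [Fintype.sum_bool, hx, xw, Bool.false_eq_true, if_true, if_false]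
    ring
  · intro t
    rw [Fintype.sum_prod_type]
    simp_rw [Fintype.sum_prod_type]
    have : ∀ a b : Bool, ∑ c : Fin n → Bool, μ (a, b, c) * (bv a * bv (c t))
        = x t a b true * bv a := by
      intro a b
      have : ∀ c : Fin n → Bool, μ (a, b, c) * (bv a * bv (c t))
          = (μ (a, b, c) * bv (c t)) * bv a := by intro c; ring
      rw [Finset.sum_congr rfl (fun c _ => this c), ← Finset.sum_mul, key2]
    simp_rw [this]
    simp only [Fintype.sum_bool, hx, xw, bv, Bool.false_eq_true, if_true, if_false]
    ring
  · intro t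
    rw [Fintype.sum_prod_type]
    simp_rw [Fintype.sum_prod_type]
    have : ∀ a b : Bool, ∑ c : Fin n → Bool, μ (a, b, c) * (bv b * bv (c t))
        = x t a b true * bv b := by
      intro a b
      have : ∀ c : Fin n → Bool, μ (a, b, c) * (bv b * bv (c t))
          = (μ (a, b, c) * bv (c t)) * bv b := by intro c; ring
      rw [Finset.sum_congr rfl (fun c _ => this c), ← Finset.sum_mul, key2]
    simp_rw [this]
    simp only [Fintype.sum_bool, hx, xw, bv, Bool.false_eq_true, if_true, if_false]
    ring

/-- assignment determined by Alice bits `a, b` and Bob bits `c`. -/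
def epsOf (n : ℕ) (a b : Bool) (c : Fin n → Bool) (k : Fin (n + 2)) : Bool :=
  if h0 : k.1 = 0 then a
  else if h1 : k.1 = 1 then b
  else c ⟨k.1 - 2, by have := k.isLt; omega⟩

lemma epsOf_alice0 {n : ℕ} (a b : Bool) (c : Fin n → Bool) :
    epsOf n a b c (aliceIdx n 0) = a := rfl

lemma epsOf_alice1 {n : ℕ} (a b : Bool) (c : Fin n → Bool) :
    epsOf n a b c (aliceIdx n 1) = b := rfl

lemma epsOf_bob {n : ℕ} (a b : Bool) (c : Fin n → Bool) (s : Fin n) :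
    epsOf n a b c (bobIdx n s) = c s := by
  have h0 : (bobIdx n s).1 = s.1 + 2 := rfl
  rw [epsOf, dif_neg (by omega), dif_neg (by omega)]
  congr 1

end Bell2nAux

theorem mem_bell2n_polytope_iff (n : ℕ) (hn : 2 ≤ n)
    (p : (Fin (n + 2) ⊕ Fin 2 × Fin n) → ℝ) :
    p ∈ convexHull ℝ (Set.range (bell2nVertex n)) ↔
      ((∀ (i : Fin 2) (s : Fin n),
          0 ≤ p (Sum.inr (i, s)) ∧
          p (Sum.inr (i, s)) ≤ p (Sum.inl (aliceIdx n i)) ∧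
          p (Sum.inr (i, s)) ≤ p (Sum.inl (bobIdx n s)) ∧
          p (Sum.inl (aliceIdx n i)) + p (Sum.inl (bobIdx n s)) - p (Sum.inr (i, s)) ≤ 1) ∧
       (∀ s t : Fin n, s ≠ t → ∀ i j : Fin 2, i ≠ j →
          -1 ≤ p (Sum.inr (i, s)) + p (Sum.inr (i, t)) + p (Sum.inr (j, t))
                - p (Sum.inr (j, s)) - p (Sum.inl (aliceIdx n i)) - p (Sum.inl (bobIdx n t)) ∧
          p (Sum.inr (i, s)) + p (Sum.inr (i, t)) + p (Sum.inr (j, t))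
                - p (Sum.inr (j, s)) - p (Sum.inl (aliceIdx n i)) - p (Sum.inl (bobIdx n t)) ≤ 0)) := by
  constructor
  · intro hp
    have vert : ∀ (f : ((Fin (n + 2) ⊕ Fin 2 × Fin n) → ℝ) → ℝ) (c : ℝ),
        IsLinearMap ℝ f → (∀ ε : Fin (n + 2) → Bool, f (bell2nVertex n ε) ≤ c) →
        f p ≤ c := by
      intro f c hf hv
      exact Bell2nAux.le_of_mem_hull hf c (by rintro w ⟨ε, rfl⟩; exact hv ε) hp
    refine ⟨fun i s => ⟨?_, ?_, ?_, ?_⟩, fun s t hst i j hij => ⟨?_, ?_⟩⟩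
    · have h := vert (fun x => -x (Sum.inr (i, s))) 0
        ⟨fun x y => by simp only [Pi.add_apply]; ring,
         fun c x => by simp only [Pi.smul_apply, smul_eq_mul]; ring⟩
        (fun ε => by
          simp only [bell2nVertex, Sum.elim_inr]
          rcases Bell2nAux.bv_mem (ε (aliceIdx n i)) with h | h <;>
            rcases Bell2nAux.bv_mem (ε (bobIdx n s)) with h' | h' <;>
            rw [h, h'] <;> norm_num)
      (try simp only at h); linarith
    · have h := vert (fun x => x (Sum.inr (i, s)) - x (Sum.inl (aliceIdx n i))) 0
        ⟨fun x y => by simp only [Pi.add_apply]; ring,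
         fun c x => by simp only [Pi.smul_apply, smul_eq_mul]; ring⟩
        (fun ε => by
          simp only [bell2nVertex, Sum.elim_inr, Sum.elim_inl]
          rcases Bell2nAux.bv_mem (ε (aliceIdx n i)) with h | h <;>
            rcases Bell2nAux.bv_mem (ε (bobIdx n s)) with h' | h' <;>
            rw [h, h'] <;> norm_num)
      (try simp only at h); linarith
    · have h := vert (fun x => x (Sum.inr (i, s)) - x (Sum.inl (bobIdx n s))) 0
        ⟨fun x y => by simp only [Pi.add_apply]; ring,
         fun c x => by simp only [Pi.smul_apply, smul_eq_mul]; ring⟩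
        (fun ε => by
          simp only [bell2nVertex, Sum.elim_inr, Sum.elim_inl]
          rcases Bell2nAux.bv_mem (ε (aliceIdx n i)) with h | h <;>
            rcases Bell2nAux.bv_mem (ε (bobIdx n s)) with h' | h' <;>
            rw [h, h'] <;> norm_num)
      (try simp only at h); linarith
    · have h := vert (fun x => x (Sum.inl (aliceIdx n i)) + x (Sum.inl (bobIdx n s))
          - x (Sum.inr (i, s))) 1
        ⟨fun x y => by simp only [Pi.add_apply]; ring,
         fun c x => by simp only [Pi.smul_apply, smul_eq_mul]; ring⟩
        (fun ε => by
          simp only [bell2nVertex, Sum.elim_inr, Sum.elim_inl]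
          rcases Bell2nAux.bv_mem (ε (aliceIdx n i)) with h | h <;>
            rcases Bell2nAux.bv_mem (ε (bobIdx n s)) with h' | h' <;>
            rw [h, h'] <;> norm_num)
      (try simp only at h); linarith
    · have h := vert (fun x => -(x (Sum.inr (i, s)) + x (Sum.inr (i, t)) + x (Sum.inr (j, t))
          - x (Sum.inr (j, s)) - x (Sum.inl (aliceIdx n i)) - x (Sum.inl (bobIdx n t)))) 1
        ⟨fun x y => by simp only [Pi.add_apply]; ring,
         fun c x => by simp only [Pi.smul_apply, smul_eq_mul]; ring⟩
        (fun ε => by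
          simp only [bell2nVertex, Sum.elim_inr, Sum.elim_inl]
          rcases Bell2nAux.bv_mem (ε (aliceIdx n i)) with h1 | h1 <;>
            rcases Bell2nAux.bv_mem (ε (aliceIdx n j)) with h2 | h2 <;>
            rcases Bell2nAux.bv_mem (ε (bobIdx n s)) with h3 | h3 <;>
            rcases Bell2nAux.bv_mem (ε (bobIdx n t)) with h4 | h4 <;>
            rw [h1, h2, h3, h4] <;> norm_num)
      (try simp only at h); linarith
    · have h := vert (fun x => x (Sum.inr (i, s)) + x (Sum.inr (i, t)) + x (Sum.inr (j, t))
          - x (Sum.inr (j, s)) - x (Sum.inl (aliceIdx n i)) - x (Sum.inl (bobIdx n t))) 0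
        ⟨fun x y => by simp only [Pi.add_apply]; ring,
         fun c x => by simp only [Pi.smul_apply, smul_eq_mul]; ring⟩
        (fun ε => by
          simp only [bell2nVertex, Sum.elim_inr, Sum.elim_inl]
          rcases Bell2nAux.bv_mem (ε (aliceIdx n i)) with h1 | h1 <;>
            rcases Bell2nAux.bv_mem (ε (aliceIdx n j)) with h2 | h2 <;>
            rcases Bell2nAux.bv_mem (ε (bobIdx n s)) with h3 | h3 <;>
            rcases Bell2nAux.bv_mem (ε (bobIdx n t)) with h4 | h4 <;>
            rw [h1, h2, h3, h4] <;> norm_num)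
      (try simp only at h); linarith
  · rintro ⟨H1, H2⟩
    obtain ⟨μ, hμ0, hμ1, hA, hB, hC, hD, hE⟩ :=
      Bell2nAux.construct (n := n) (by omega)
        (p (Sum.inl (aliceIdx n 0))) (p (Sum.inl (aliceIdx n 1)))
        (fun s => p (Sum.inl (bobIdx n s)))
        (fun s => p (Sum.inr (0, s))) (fun s => p (Sum.inr (1, s)))
        (fun s => (H1 0 s).1) (fun s => (H1 0 s).2.1) (fun s => (H1 0 s).2.2.1)
        (fun s => (H1 0 s).2.2.2)
        (fun s => (H1 1 s).1) (fun s => (H1 1 s).2.1) (fun s => (H1 1 s).2.2.1)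
        (fun s => (H1 1 s).2.2.2)
        (fun s t hst => by
          have h := (H2 t s (Ne.symm hst) 0 1 (by decide)).2
          linarith [h])
        (fun s t hst => by
          have h := (H2 t s (Ne.symm hst) 1 0 (by decide)).1
          linarith [h])
        (fun s t hst => by
          have h := (H2 t s (Ne.symm hst) 1 0 (by decide)).2
          linarith [h])
        (fun s t hst => by
          have h := (H2 t s (Ne.symm hst) 0 1 (by decide)).1
          linarith [h])
    have hrepr : p = ∑ i : Bool × Bool × (Fin n → Bool),
        μ i • bell2nVertex n (Bell2nAux.epsOf n i.1 i.2.1 i.2.2) := by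
      funext k
      rw [Finset.sum_apply]
      simp only [Pi.smul_apply, smul_eq_mul, bell2nVertex]
      match k with
      | Sum.inl ⟨0, hj⟩ =>
        simp only [Sum.elim_inl]
        have e : (⟨0, hj⟩ : Fin (n + 2)) = aliceIdx n 0 := rfl
        rw [e]
        simp only [Bell2nAux.epsOf_alice0]
        exact hA.symm
      | Sum.inl ⟨1, hj⟩ =>
        simp only [Sum.elim_inl]
        have e : (⟨1, hj⟩ : Fin (n + 2)) = aliceIdx n 1 := rfl
        rw [e]
        simp only [Bell2nAux.epsOf_alice1]
        exact hB.symm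
      | Sum.inl ⟨jv + 2, hj⟩ =>
        simp only [Sum.elim_inl]
        have e : (⟨jv + 2, hj⟩ : Fin (n + 2)) = bobIdx n ⟨jv, by omega⟩ := rfl
        rw [e]
        simp only [Bell2nAux.epsOf_bob]
        exact (hC ⟨jv, by omega⟩).symm
      | Sum.inr (i, s) =>
        simp only [Sum.elim_inr, Bell2nAux.epsOf_bob]
        fin_cases i
        · simp only [Bell2nAux.epsOf_alice0]
          exact (hD s).symm
        · simp only [Bell2nAux.epsOf_alice1]
          exact (hE s).symm
    have hpos : (0 : ℝ) < ∑ i : Bool × Bool × (Fin n → Bool), μ i := by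
      rw [hμ1]; norm_num
    have hmem := Finset.centerMass_mem_convexHull
      (Finset.univ : Finset (Bool × Bool × (Fin n → Bool)))
      (fun i _ => hμ0 i) hpos
      (z := fun i => bell2nVertex n (Bell2nAux.epsOf n i.1 i.2.1 i.2.2))
      (fun i _ => Set.mem_range_self _)
    rwa [Finset.centerMass_eq_of_sum_1 _ _ hμ1, ← hrepr] at hmem
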